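/- Let V be a finite-dimensional complex normed vector space and let p be a nonzero complex polynomial on V in n complex variables. There exist constants c > 0 and m ≥ 0 (depending only on p) such that for every ρ > 0, every z₀ ∈ V, and every function h holomorphic on the closed polydisc Δ_ρ(z₀) = {z : ‖z − z₀‖ ≤ ρ} (with ‖z‖ = sup_j |z_j|), one has |h(z₀)| ≤ c ρ^{−m} sup_{z ∈ Δ_ρ(z₀)} |p(z) h(z)|. -/

import Mathlib

noncomputable section

lemma multiset_prod_ge {r : ℝ} (hr : 0 ≤ r) (m : Multiset ℝ) (hm : ∀ x ∈ m, r ≤ x) :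
    r ^ (Multiset.card m) ≤ m.prod := by
  induction m using Multiset.induction_on with
  | empty => simp
  | cons a s ih =>
    simp only [Multiset.card_cons, Multiset.prod_cons, pow_succ]
    have ha := hm a (Multiset.mem_cons_self a s)
    have hs := ih (fun x hx => hm x (Multiset.mem_cons_of_mem hx))
    calc r ^ Multiset.card s * r ≤ s.prod * a := by
          apply mul_le_mul hs ha hr
          exact le_trans (pow_nonneg hr _) hs
      _ = a * s.prod := mul_comm _ _

open Polynomial Metric in
lemma one_var (r : ℝ) (hr : 0 < r) (q : Polynomial ℂ)
    (f : ℂ → ℂ) (U : Set ℂ) (hU : IsOpen U) (hsub : closedBall (0:ℂ) r ⊆ U)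
    (hf : DifferentiableOn ℂ f U) (B : ℝ)
    (hB : ∀ t ∈ closedBall (0:ℂ) r, ‖q.eval t * f t‖ ≤ B) :
    ‖q.leadingCoeff‖ * r ^ q.natDegree * ‖f 0‖ ≤ B := by
  have h0mem : (0:ℂ) ∈ closedBall (0:ℂ) r := by simp [hr.le]
  rcases eq_or_ne q 0 with rfl | hq
  · simpa using le_trans (norm_nonneg _) (hB 0 h0mem)
  set a := q.leadingCoeff with ha
  set R := q.roots with hR
  have hsplit : Splits q := IsAlgClosed.splits q
  have hcard : Multiset.card R = q.natDegree := splits_iff_card_roots.mp hsplit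
  have hqe : q = C a * (R.map fun α => X - C α).prod := hsplit.eq_prod_roots
  set g : ℂ → ℂ → ℂ := fun α t => if ‖α‖ ≤ r then ((r:ℂ)^2 - (starRingEnd ℂ) α * t)/r else (t - α) with hg
  set F : ℂ → ℂ := fun t => a * (R.map fun α => g α t).prod * f t with hF
  have hdiffg : ∀ α : ℂ, Differentiable ℂ (fun t => g α t) := by
    intro α
    by_cases hα : ‖α‖ ≤ r <;> simp only [hg, hα, if_true, if_false]
    · exact ((differentiable_const _).sub ((differentiable_const _).mul differentiable_id)).div_const _
    · exact differentiable_id.sub (differentiable_const _)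
  have hdiffP : ∀ m : Multiset ℂ, Differentiable ℂ (fun t => (m.map fun α => g α t).prod) := by
    intro m
    induction m using Multiset.induction_on with
    | empty => simpa using differentiable_const (1:ℂ)
    | cons b s ih =>
      simp only [Multiset.map_cons, Multiset.prod_cons]
      exact (hdiffg b).mul ih
  have hFd : DiffContOnCl ℂ F (ball (0:ℂ) r) := by
    apply DifferentiableOn.diffContOnCl
    rw [closure_ball (0:ℂ) hr.ne']
    intro t ht
    exact (((differentiable_const a).mul (hdiffP R)).differentiableAt.differentiableWithinAt.mul
      ((hf t (hsub ht)).differentiableAt (hU.mem_nhds (hsub ht))).differentiableWithinAt)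
  have hnorm_eq : ∀ t : ℂ, ‖t‖ = r → ‖F t‖ = ‖q.eval t * f t‖ := by
    intro t htr
    have hprodnorm : ∀ (m : Multiset ℂ) (G : ℂ → ℂ), ‖(m.map G).prod‖ = (m.map fun α => ‖G α‖).prod := by
      intro m G
      induction m using Multiset.induction_on with
      | empty => simp
      | cons b s ih => simp [norm_mul, ih]
    have hgnorm : ∀ α : ℂ, ‖g α t‖ = ‖t - α‖ := by
      intro α
      by_cases hα : ‖α‖ ≤ r <;> simp only [hg, hα, if_true, if_false]
      have htt : (starRingEnd ℂ) t * t = (r:ℂ)^2 := by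
        have := Complex.normSq_eq_conj_mul_self (z := t)
        rw [← this]
        rw [Complex.normSq_eq_norm_sq]
        norm_cast
        rw [← htr]
      have : (r:ℂ)^2 - (starRingEnd ℂ) α * t = ((starRingEnd ℂ) (t - α)) * t := by
        rw [map_sub, sub_mul, htt]
      rw [this, norm_div, norm_mul]
      have : ‖(starRingEnd ℂ) (t - α)‖ = ‖t - α‖ := RCLike.norm_conj _
      rw [this, htr]
      have : ‖(r:ℂ)‖ = r := by simp [abs_of_pos hr]
      rw [this]
      field_simp
    have : (R.map fun α => ‖g α t‖) = (R.map fun α => ‖t - α‖) := Multiset.map_congr rfl (fun α _ => hgnorm α)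
    rw [hF]
    simp only [norm_mul]
    rw [hprodnorm R (fun α => g α t), this, ← hprodnorm R (fun α => t - α)]
    have hqt : q.eval t = a * (R.map fun α => t - α).prod := by
      conv_lhs => rw [hqe]
      rw [eval_mul, eval_C, eval_multiset_prod]
      congr 1
      rw [Multiset.map_map]
      exact congrArg Multiset.prod (Multiset.map_congr rfl (fun α _ => by simp))
    rw [hqt]
    simp [norm_mul]
  have hg0 : ∀ α : ℂ, r ≤ ‖g α 0‖ := by
    intro α
    by_cases hα : ‖α‖ ≤ r <;> simp only [hg, hα, if_true, if_false]
    · rw [mul_zero, sub_zero, norm_div]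
      have h1 : ‖(r:ℂ)^2‖ = r^2 := by rw [norm_pow]; simp [abs_of_pos hr]
      have h2 : ‖(r:ℂ)‖ = r := by simp [abs_of_pos hr]
      rw [h1, h2, pow_two, mul_div_assoc, div_self hr.ne']
      simp
    · rw [zero_sub, norm_neg]
      linarith [not_le.mp hα]
  have hF0 : ‖a‖ * r ^ q.natDegree * ‖f 0‖ ≤ ‖F 0‖ := by
    rw [hF]
    simp only [norm_mul]
    have hprodnorm : ∀ (m : Multiset ℂ) (G : ℂ → ℂ), ‖(m.map G).prod‖ = (m.map fun α => ‖G α‖).prod := by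
      intro m G
      induction m using Multiset.induction_on with
      | empty => simp
      | cons b s ih => simp [norm_mul, ih]
    rw [hprodnorm]
    have : r ^ q.natDegree ≤ (R.map fun α => ‖g α 0‖).prod := by
      rw [← hcard]
      have := multiset_prod_ge hr.le (R.map fun α => ‖g α 0‖) (by
        intro x hx
        rcases Multiset.mem_map.mp hx with ⟨α, _, rfl⟩
        exact hg0 α)
      simpa using this
    calc ‖a‖ * r ^ q.natDegree * ‖f 0‖ ≤ ‖a‖ * (R.map fun α => ‖g α 0‖).prod * ‖f 0‖ := by
          apply mul_le_mul_of_nonneg_right _ (norm_nonneg _)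
          exact mul_le_mul_of_nonneg_left this (norm_nonneg _)
      _ = _ := rfl
  have hFle : ‖F 0‖ ≤ B := by
    apply Complex.norm_le_of_forall_mem_frontier_norm_le isBounded_ball hFd
    · intro z hz
      rw [frontier_ball (0:ℂ) hr.ne'] at hz
      have hzr : ‖z‖ = r := by simpa using hz
      rw [hnorm_eq z hzr]
      exact hB z (by simp [hzr.le, mem_closedBall, dist_zero_right, hzr])
    · rw [closure_ball (0:ℂ) hr.ne']
      exact h0mem
  exact le_trans hF0 hFle

open Polynomial in
lemma coeff_prod_varying {ι : Type*} [DecidableEq ι] (s : Finset ι) (f : ι → Polynomial ℂ) (d : ι → ℕ)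
    (h : ∀ i ∈ s, (f i).natDegree ≤ d i) :
    (∏ i ∈ s, f i).coeff (∑ i ∈ s, d i) = ∏ i ∈ s, (f i).coeff (d i) := by
  induction s using Finset.induction_on with
  | empty => simp
  | @insert a s hnot ih =>
    rw [Finset.prod_insert hnot, Finset.sum_insert hnot, Finset.prod_insert hnot,
      coeff_mul_add_eq_of_natDegree_le (h a (Finset.mem_insert_self a s))
        (le_trans (natDegree_prod_le _ _) (Finset.sum_le_sum (fun i hi => h i (Finset.mem_insert_of_mem hi)))),
      ih (fun i hi => h i (Finset.mem_insert_of_mem hi))]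

open Polynomial MvPolynomial in
lemma slice_term_natDegree_le {n : ℕ} (z₀ v : Fin n → ℂ) (c : Fin n →₀ ℕ) (a : ℂ) :
    (MvPolynomial.aeval (fun j => Polynomial.C (z₀ j) + Polynomial.C (v j) * Polynomial.X)
      (MvPolynomial.monomial c a)).natDegree ≤ c.sum fun _ e => e := by
  rw [MvPolynomial.aeval_monomial]
  refine le_trans (natDegree_mul_le) ?_
  simp only [Polynomial.algebraMap_eq, natDegree_C, zero_add]
  rw [Finsupp.prod, Finsupp.sum]
  refine le_trans (natDegree_prod_le _ _) ?_
  apply Finset.sum_le_sum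
  intro j hj
  rw [natDegree_pow]
  have h1 : (Polynomial.C (z₀ j) + Polynomial.C (v j) * Polynomial.X).natDegree ≤ 1 := by
    refine le_trans (natDegree_add_le _ _) ?_
    simp only [natDegree_C, max_le_iff, Nat.zero_le, true_and]
    exact le_trans (natDegree_C_mul_le _ _) (by simp)
  calc c j * (Polynomial.C (z₀ j) + Polynomial.C (v j) * Polynomial.X).natDegree
      ≤ c j * 1 := Nat.mul_le_mul_left _ h1
    _ = c j := mul_one _

open Polynomial MvPolynomial in
lemma slice_term_coeff {n : ℕ} (z₀ v : Fin n → ℂ) (c : Fin n →₀ ℕ) (a : ℂ) (N : ℕ)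
    (hc : (c.sum fun _ e => e) ≤ N) :
    (MvPolynomial.aeval (fun j => Polynomial.C (z₀ j) + Polynomial.C (v j) * Polynomial.X)
      (MvPolynomial.monomial c a)).coeff N
    = if (c.sum fun _ e => e) = N then a * c.prod (fun j k => v j ^ k) else 0 := by
  by_cases hd : (c.sum fun _ e => e) = N
  · rw [if_pos hd, MvPolynomial.aeval_monomial, Polynomial.algebraMap_eq, ← hd, Finsupp.sum,
      Finsupp.prod, Polynomial.coeff_C_mul,
      coeff_prod_varying c.support _ c (fun j hj => by
        rw [natDegree_pow]
        have h1 : (Polynomial.C (z₀ j) + Polynomial.C (v j) * Polynomial.X).natDegree ≤ 1 := by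
          refine le_trans (natDegree_add_le _ _) ?_
          simp only [natDegree_C, max_le_iff, Nat.zero_le, true_and]
          exact le_trans (natDegree_C_mul_le _ _) (by simp)
        calc c j * (Polynomial.C (z₀ j) + Polynomial.C (v j) * Polynomial.X).natDegree
            ≤ c j * 1 := Nat.mul_le_mul_left _ h1
          _ = c j := mul_one _)]
    congr 1
    apply Finset.prod_congr rfl
    intro j hj
    have h1 : (Polynomial.C (z₀ j) + Polynomial.C (v j) * Polynomial.X).natDegree ≤ 1 := by
      refine le_trans (natDegree_add_le _ _) ?_
      simp only [natDegree_C, max_le_iff, Nat.zero_le, true_and]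
      exact le_trans (natDegree_C_mul_le _ _) (by simp)
    have := coeff_pow_of_natDegree_le (p := Polynomial.C (z₀ j) + Polynomial.C (v j) * Polynomial.X)
      (n := 1) (m := c j) h1
    rw [mul_one] at this
    rw [this]
    congr 1
    simp
  · rw [if_neg hd]
    apply coeff_eq_zero_of_natDegree_lt
    exact lt_of_le_of_lt (slice_term_natDegree_le z₀ v c a) (lt_of_le_of_ne hc hd)

open Polynomial MvPolynomial in
lemma slice_natDegree_le {n : ℕ} (z₀ v : Fin n → ℂ) (p : MvPolynomial (Fin n) ℂ) :
    (MvPolynomial.aeval (fun j => Polynomial.C (z₀ j) + Polynomial.C (v j) * Polynomial.X)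
      p).natDegree ≤ p.totalDegree := by
  set N := p.totalDegree with hN
  conv_lhs => rw [p.as_sum]
  rw [map_sum]
  apply natDegree_sum_le_of_forall_le
  intro c hc
  exact le_trans (slice_term_natDegree_le z₀ v c _) (MvPolynomial.le_totalDegree hc)

open Polynomial MvPolynomial in
lemma slice_coeff_top {n : ℕ} (z₀ v : Fin n → ℂ) (p : MvPolynomial (Fin n) ℂ) :
    (MvPolynomial.aeval (fun j => Polynomial.C (z₀ j) + Polynomial.C (v j) * Polynomial.X)
      p).coeff p.totalDegree
    = MvPolynomial.eval v (MvPolynomial.homogeneousComponent p.totalDegree p) := by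
  set N := p.totalDegree with hN
  conv_lhs => rw [p.as_sum]
  rw [map_sum, finset_sum_coeff, homogeneousComponent_apply, map_sum, Finset.sum_filter]
  apply Finset.sum_congr rfl
  intro c hc
  have hdeg : Finsupp.degree c = c.sum fun _ e => e := rfl
  rw [MvPolynomial.eval_monomial,
    slice_term_coeff z₀ v c _ N (MvPolynomial.le_totalDegree hc), hdeg]

open Polynomial MvPolynomial in
lemma slice_eval {n : ℕ} (z₀ v : Fin n → ℂ) (p : MvPolynomial (Fin n) ℂ) (t : ℂ) :
    Polynomial.eval t (MvPolynomial.aeval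
      (fun j => Polynomial.C (z₀ j) + Polynomial.C (v j) * Polynomial.X) p)
    = MvPolynomial.eval (z₀ + t • v) p := by
  have h1 := MvPolynomial.comp_aeval_apply (Polynomial.aeval t)
    (f := fun j => Polynomial.C (z₀ j) + Polynomial.C (v j) * Polynomial.X) p
  rw [Polynomial.aeval_def, Polynomial.eval₂_eq_eval_map, Algebra.algebraMap_self,
    Polynomial.map_id] at h1
  rw [h1]
  rw [MvPolynomial.aeval_def, Algebra.algebraMap_self]
  have : (fun i => (Polynomial.aeval t) (Polynomial.C (z₀ i) + Polynomial.C (v i) * Polynomial.X))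
      = z₀ + t • v := by
    funext i
    simp [Pi.add_apply, Pi.smul_apply, smul_eq_mul]
    ring
  rw [this]
  rfl

open MvPolynomial in
lemma eval_smul_homogeneousComponent {n : ℕ} (p : MvPolynomial (Fin n) ℂ) (N : ℕ) (c : ℂ)
    (w : Fin n → ℂ) :
    MvPolynomial.eval (c • w) (homogeneousComponent N p)
      = c ^ N * MvPolynomial.eval w (homogeneousComponent N p) := by
  rw [homogeneousComponent_apply, map_sum, map_sum, Finset.mul_sum]
  apply Finset.sum_congr rfl
  intro d hd
  rw [Finset.mem_filter] at hd
  rw [MvPolynomial.eval_monomial, MvPolynomial.eval_monomial]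
  have hprod : d.prod (fun j k => ((c • w) j) ^ k) = c ^ N * d.prod fun j k => (w j)^k := by
    rw [Finsupp.prod, Finsupp.prod]
    simp only [Pi.smul_apply, smul_eq_mul, mul_pow]
    rw [Finset.prod_mul_distrib, Finset.prod_pow_eq_pow_sum]
    congr 1
    exact congrArg (fun k => c ^ k) hd.2
  rw [hprod]
  ring

open MvPolynomial in
lemma exists_dir {n : ℕ} (p : MvPolynomial (Fin n) ℂ) (hp : p ≠ 0) :
    ∃ v : Fin n → ℂ, ‖v‖ ≤ 1 ∧
      MvPolynomial.eval v (homogeneousComponent p.totalDegree p) ≠ 0 := by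
  set N := p.totalDegree with hN
  have hne : homogeneousComponent N p ≠ 0 := by
    have hsupp : p.support.Nonempty := by
      rw [Finset.nonempty_iff_ne_empty]
      intro h0
      exact hp (MvPolynomial.support_eq_empty.mp h0)
    obtain ⟨c, hc, he⟩ := Finset.exists_mem_eq_sup p.support hsupp (fun c => c.sum fun _ e => e)
    intro h0
    have hcoeff := MvPolynomial.coeff_homogeneousComponent (n := N) (φ := p) c
    rw [h0] at hcoeff
    have hcd : Finsupp.degree c = N := by rw [hN, MvPolynomial.totalDegree, he]; rfl
    rw [if_pos hcd, MvPolynomial.coeff_zero] at hcoeff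
    exact (MvPolynomial.mem_support_iff.mp hc) hcoeff.symm
  obtain ⟨w, hw⟩ : ∃ w, MvPolynomial.eval w (homogeneousComponent N p) ≠ 0 := by
    by_contra hall
    push_neg at hall
    exact hne (MvPolynomial.funext (fun x => by simp [hall x]))
  set M : ℝ := max 1 ‖w‖ with hM
  have hM1 : (1:ℝ) ≤ M := le_max_left _ _
  have hM0 : (0:ℝ) < M := lt_of_lt_of_le one_pos hM1
  refine ⟨((M:ℂ)⁻¹) • w, ?_, ?_⟩
  · rw [norm_smul]
    have : ‖((M:ℂ)⁻¹)‖ = M⁻¹ := by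
      rw [norm_inv]
      simp [Complex.norm_real, abs_of_pos hM0]
    rw [this]
    rw [inv_mul_le_iff₀ hM0, mul_one]
    exact le_max_right _ _
  · rw [eval_smul_homogeneousComponent]
    apply mul_ne_zero _ hw
    apply pow_ne_zero
    simpa using hM0.ne'

/-- Ehrenpreis's division lemma. -/
theorem ehrenpreis_division (n : ℕ) (p : MvPolynomial (Fin n) ℂ) (hp : p ≠ 0) :
    ∃ (c : ℝ) (m : ℕ), 0 < c ∧
      ∀ (ρ : ℝ), 0 < ρ → ∀ (z₀ : Fin n → ℂ) (h : (Fin n → ℂ) → ℂ) (U : Set (Fin n → ℂ)),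
        IsOpen U → Metric.closedBall z₀ ρ ⊆ U → DifferentiableOn ℂ h U →
        ∀ B : ℝ, (∀ z ∈ Metric.closedBall z₀ ρ, ‖MvPolynomial.eval z p * h z‖ ≤ B) →
          ‖h z₀‖ ≤ c * ρ⁻¹ ^ m * B := by
  obtain ⟨v, hv1, hva⟩ := exists_dir p hp
  set N := p.totalDegree with hN
  set a := MvPolynomial.eval v (MvPolynomial.homogeneousComponent N p) with haa
  have hapos : (0:ℝ) < ‖a‖ := norm_pos_iff.mpr hva
  refine ⟨‖a‖⁻¹, N, inv_pos.mpr hapos, ?_⟩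
  intro ρ hρ z₀ h U hU hsub hdiff B hB
  set Q := MvPolynomial.aeval
    (fun j => Polynomial.C (z₀ j) + Polynomial.C (v j) * Polynomial.X) p with hQ
  have hdeg : Q.natDegree ≤ N := slice_natDegree_le z₀ v p
  have hcoeff : Q.coeff N = a := slice_coeff_top z₀ v p
  have hndeg : Q.natDegree = N :=
    le_antisymm hdeg (Polynomial.le_natDegree_of_ne_zero (by rw [hcoeff]; exact hva))
  have hlead : Q.leadingCoeff = a := by rw [Polynomial.leadingCoeff, hndeg, hcoeff]
  set φ : ℂ → (Fin n → ℂ) := fun t => z₀ + t • v with hφ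
  have hφdiff : Differentiable ℂ φ := by
    apply (differentiable_const z₀).add
    exact differentiable_id.smul_const v
  have hmem : ∀ t : ℂ, t ∈ Metric.closedBall (0:ℂ) ρ → φ t ∈ Metric.closedBall z₀ ρ := by
    intro t ht
    rw [Metric.mem_closedBall, dist_zero_right] at ht
    rw [Metric.mem_closedBall, dist_eq_norm]
    have : φ t - z₀ = t • v := by rw [hφ]; simp
    rw [this, norm_smul]
    calc ‖t‖ * ‖v‖ ≤ ρ * 1 := mul_le_mul ht hv1 (norm_nonneg v) hρ.le
      _ = ρ := mul_one ρ
  set U₁ : Set ℂ := φ ⁻¹' U with hU₁def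
  have hU₁ : IsOpen U₁ := hU.preimage hφdiff.continuous
  have hsub₁ : Metric.closedBall (0:ℂ) ρ ⊆ U₁ := fun t ht => hsub (hmem t ht)
  have hf : DifferentiableOn ℂ (fun t => h (φ t)) U₁ :=
    hdiff.comp hφdiff.differentiableOn (fun t ht => ht)
  have hBk : ∀ t ∈ Metric.closedBall (0:ℂ) ρ, ‖Q.eval t * h (φ t)‖ ≤ B := by
    intro t ht
    rw [hQ, slice_eval]
    exact hB _ (hmem t ht)
  have key := one_var ρ hρ Q (fun t => h (φ t)) U₁ hU₁ hsub₁ hf B hBk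
  rw [hlead, hndeg] at key
  have h0 : φ 0 = z₀ := by rw [hφ]; simp
  replace key : ‖a‖ * ρ ^ N * ‖h z₀‖ ≤ B := by simpa [h0] using key
  have hfin : ‖a‖⁻¹ * ρ⁻¹ ^ N * B = B / (‖a‖ * ρ ^ N) := by
    rw [inv_pow]
    field_simp
  rw [hfin, le_div_iff₀ (by positivity)]
  calc ‖h z₀‖ * (‖a‖ * ρ ^ N) = ‖a‖ * ρ ^ N * ‖h z₀‖ := by ring
    _ ≤ B := key
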